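/- Fundamental theorem of Hopf modules for Hopf monads: let T be a right Hopf monad on a right autonomous category, and let (M,r,ρ) be a right Hopf T-module such that the pair (ρ, id_M ⊗ η_1) admits an equalizer i : M^{coT} → M which is preserved by T. Then r∘T(i) : (T(M^{coT}), μ_{M^{coT}}, T_2(M^{coT},1)) → (M,r,ρ) is an isomorphism of right Hopf T-modules. -/

import Mathlib

open CategoryTheory MonoidalCategory

namespace HopfMonadPaper

variable {C : Type*} [Category C] [MonoidalCategory C]

/-- A comonoidal (oplax monoidal) structure on an endofunctor `T`,
with coproduct `δ X Y : T(X ⊗ Y) ⟶ T(X) ⊗ T(Y)` and counit `ε : T(𝟙) ⟶ 𝟙`. -/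
structure Comonoidal (T : C ⥤ C) where
  δ : ∀ X Y : C, T.obj (X ⊗ Y) ⟶ T.obj X ⊗ T.obj Y
  ε : T.obj (𝟙_ C) ⟶ 𝟙_ C
  δ_natural : ∀ {X X' Y Y' : C} (f : X ⟶ X') (g : Y ⟶ Y'),
    T.map (f ⊗ₘ g) ≫ δ X' Y' = δ X Y ≫ (T.map f ⊗ₘ T.map g)
  coassoc : ∀ X Y Z : C,
    δ (X ⊗ Y) Z ≫ (δ X Y ⊗ₘ 𝟙 (T.obj Z)) ≫ (α_ (T.obj X) (T.obj Y) (T.obj Z)).hom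
      = T.map (α_ X Y Z).hom ≫ δ X (Y ⊗ Z) ≫ (𝟙 (T.obj X) ⊗ₘ δ Y Z)
  counit_left : ∀ X : C,
    δ (𝟙_ C) X ≫ (ε ⊗ₘ 𝟙 (T.obj X)) ≫ (λ_ (T.obj X)).hom = T.map (λ_ X).hom
  counit_right : ∀ X : C,
    δ X (𝟙_ C) ≫ (𝟙 (T.obj X) ⊗ₘ ε) ≫ (ρ_ (T.obj X)).hom = T.map (ρ_ X).hom

/-- The bimonad axioms: the product and unit of the monad are comonoidal. -/
structure IsBimonad (T : Monad C) (Q : Comonoidal T.toFunctor) : Prop where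
  mu_δ : ∀ X Y : C, T.μ.app (X ⊗ Y) ≫ Q.δ X Y
    = T.map (Q.δ X Y) ≫ Q.δ (T.obj X) (T.obj Y) ≫ (T.μ.app X ⊗ₘ T.μ.app Y)
  mu_ε : T.μ.app (𝟙_ C) ≫ Q.ε = T.map Q.ε ≫ Q.ε
  eta_δ : ∀ X Y : C, T.η.app (X ⊗ Y) ≫ Q.δ X Y = T.η.app X ⊗ₘ T.η.app Y
  eta_ε : T.η.app (𝟙_ C) ≫ Q.ε = 𝟙 (𝟙_ C)

/-- A choice of left duals: `d X = ˡX` with evaluation `ev X : ˡX ⊗ X ⟶ 𝟙`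
and coevaluation `coev X : 𝟙 ⟶ X ⊗ ˡX`, satisfying the triangle identities. -/
structure LeftDualData (C : Type*) [Category C] [MonoidalCategory C] where
  d : C → C
  ev : ∀ X : C, d X ⊗ X ⟶ 𝟙_ C
  coev : ∀ X : C, 𝟙_ C ⟶ X ⊗ d X
  tri1 : ∀ X : C, (ρ_ (d X)).inv ≫ (𝟙 (d X) ⊗ₘ coev X) ≫ (α_ (d X) X (d X)).inv
    ≫ (ev X ⊗ₘ 𝟙 (d X)) ≫ (λ_ (d X)).hom = 𝟙 (d X)
  tri2 : ∀ X : C, (λ_ X).inv ≫ (coev X ⊗ₘ 𝟙 X) ≫ (α_ X (d X) X).hom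
    ≫ (𝟙 X ⊗ₘ ev X) ≫ (ρ_ X).hom = 𝟙 X

/-- Left transpose (left dual) of a morphism. -/
def LeftDualData.tr (L : LeftDualData C) {X Y : C} (f : X ⟶ Y) : L.d Y ⟶ L.d X :=
  (ρ_ (L.d Y)).inv ≫ (𝟙 (L.d Y) ⊗ₘ L.coev X) ≫ (𝟙 (L.d Y) ⊗ₘ (f ⊗ₘ 𝟙 (L.d X)))
    ≫ (α_ (L.d Y) Y (L.d X)).inv ≫ (L.ev Y ⊗ₘ 𝟙 (L.d X)) ≫ (λ_ (L.d X)).hom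

/-- A choice of right duals: `d X = ʳX` with evaluation `ev X : X ⊗ ʳX ⟶ 𝟙`
and coevaluation `coev X : 𝟙 ⟶ ʳX ⊗ X`, satisfying the triangle identities. -/
structure RightDualData (C : Type*) [Category C] [MonoidalCategory C] where
  d : C → C
  ev : ∀ X : C, X ⊗ d X ⟶ 𝟙_ C
  coev : ∀ X : C, 𝟙_ C ⟶ d X ⊗ X
  tri1 : ∀ X : C, (ρ_ X).inv ≫ (𝟙 X ⊗ₘ coev X) ≫ (α_ X (d X) X).inv
    ≫ (ev X ⊗ₘ 𝟙 X) ≫ (λ_ X).hom = 𝟙 X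
  tri2 : ∀ X : C, (λ_ (d X)).inv ≫ (coev X ⊗ₘ 𝟙 (d X)) ≫ (α_ (d X) X (d X)).hom
    ≫ (𝟙 (d X) ⊗ₘ ev X) ≫ (ρ_ (d X)).hom = 𝟙 (d X)

/-- Right transpose (right dual) of a morphism. -/
def RightDualData.tr (R : RightDualData C) {X Y : C} (f : X ⟶ Y) : R.d Y ⟶ R.d X :=
  (λ_ (R.d Y)).inv ≫ (R.coev X ⊗ₘ 𝟙 (R.d Y)) ≫ (α_ (R.d X) X (R.d Y)).hom
    ≫ (𝟙 (R.d X) ⊗ₘ (f ⊗ₘ 𝟙 (R.d Y))) ≫ (𝟙 (R.d X) ⊗ₘ R.ev Y) ≫ (ρ_ (R.d X)).hom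

/-- The axioms for a left antipode `s X : T(ˡT(X)) ⟶ ˡX` of a bimonad. -/
structure IsLeftAntipode (T : Monad C) (Q : Comonoidal T.toFunctor) (L : LeftDualData C)
    (s : ∀ X : C, T.obj (L.d (T.obj X)) ⟶ L.d X) : Prop where
  natural : ∀ {X Y : C} (f : X ⟶ Y),
    T.map (L.tr (T.map f)) ≫ s X = s Y ≫ L.tr f
  lant1 : ∀ X : C,
    T.map (L.tr (T.η.app X) ⊗ₘ 𝟙 X) ≫ T.map (L.ev X) ≫ Q.ε
      = Q.δ (L.d (T.obj X)) X
        ≫ ((T.map (L.tr (T.μ.app X)) ≫ s (T.obj X)) ⊗ₘ 𝟙 (T.obj X)) ≫ L.ev (T.obj X)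
  lant2 : ∀ X : C,
    Q.ε ≫ L.coev X ≫ (T.η.app X ⊗ₘ 𝟙 (L.d X))
      = T.map (L.coev (T.obj X)) ≫ Q.δ (T.obj X) (L.d (T.obj X)) ≫ (T.μ.app X ⊗ₘ s X)

/-- The axioms for a right antipode `s X : T(ʳT(X)) ⟶ ʳX` of a bimonad. -/
structure IsRightAntipode (T : Monad C) (Q : Comonoidal T.toFunctor) (R : RightDualData C)
    (s : ∀ X : C, T.obj (R.d (T.obj X)) ⟶ R.d X) : Prop where
  natural : ∀ {X Y : C} (f : X ⟶ Y),
    T.map (R.tr (T.map f)) ≫ s X = s Y ≫ R.tr f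
  rant1 : ∀ X : C,
    T.map (𝟙 X ⊗ₘ R.tr (T.η.app X)) ≫ T.map (R.ev X) ≫ Q.ε
      = Q.δ X (R.d (T.obj X))
        ≫ (𝟙 (T.obj X) ⊗ₘ (T.map (R.tr (T.μ.app X)) ≫ s (T.obj X))) ≫ R.ev (T.obj X)
  rant2 : ∀ X : C,
    Q.ε ≫ R.coev X ≫ (𝟙 (R.d X) ⊗ₘ T.η.app X)
      = T.map (R.coev (T.obj X)) ≫ Q.δ (R.d (T.obj X)) (T.obj X) ≫ (s X ⊗ₘ T.μ.app X)

/-- The canonical morphism `X ⟶ ʳ(ˡX)`. -/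
def canRL (L : LeftDualData C) (R : RightDualData C) (X : C) : X ⟶ R.d (L.d X) :=
  (λ_ X).inv ≫ (R.coev (L.d X) ⊗ₘ 𝟙 X) ≫ (α_ (R.d (L.d X)) (L.d X) X).hom
    ≫ (𝟙 (R.d (L.d X)) ⊗ₘ L.ev X) ≫ (ρ_ (R.d (L.d X))).hom

/-- The canonical morphism `ʳ(ˡX) ⟶ X`. -/
def canRLinv (L : LeftDualData C) (R : RightDualData C) (X : C) : R.d (L.d X) ⟶ X :=
  (λ_ (R.d (L.d X))).inv ≫ (L.coev X ⊗ₘ 𝟙 (R.d (L.d X)))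
    ≫ (α_ X (L.d X) (R.d (L.d X))).hom ≫ (𝟙 X ⊗ₘ R.ev (L.d X)) ≫ (ρ_ X).hom

/-- The canonical morphism `X ⟶ ˡ(ʳX)`. -/
def canLR (L : LeftDualData C) (R : RightDualData C) (X : C) : X ⟶ L.d (R.d X) :=
  (ρ_ X).inv ≫ (𝟙 X ⊗ₘ L.coev (R.d X)) ≫ (α_ X (R.d X) (L.d (R.d X))).inv
    ≫ (R.ev X ⊗ₘ 𝟙 (L.d (R.d X))) ≫ (λ_ (L.d (R.d X))).hom

/-- The canonical morphism `ˡ(ʳX) ⟶ X`. -/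
def canLRinv (L : LeftDualData C) (R : RightDualData C) (X : C) : L.d (R.d X) ⟶ X :=
  (ρ_ (L.d (R.d X))).inv ≫ (𝟙 (L.d (R.d X)) ⊗ₘ R.coev X)
    ≫ (α_ (L.d (R.d X)) (R.d X) X).inv ≫ (L.ev (R.d X) ⊗ₘ 𝟙 X) ≫ (λ_ X).hom


/-- The comultiplication `T_2(𝟙,𝟙)` of the coalgebra `T(𝟙)`. -/
def Delta1 (T : C ⥤ C) (Q : Comonoidal T) :
    T.obj (𝟙_ C) ⟶ T.obj (𝟙_ C) ⊗ T.obj (𝟙_ C) :=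
  T.map (λ_ (𝟙_ C)).inv ≫ Q.δ (𝟙_ C) (𝟙_ C)

/-- A right `T`-comodule, i.e. a right comodule over the coalgebra `T(𝟙)`
(with comultiplication `T_2(𝟙,𝟙)` and counit `T_0`). -/
structure IsRightComodule (T : C ⥤ C) (Q : Comonoidal T)
    (M : C) (ρ : M ⟶ M ⊗ T.obj (𝟙_ C)) : Prop where
  coassoc : ρ ≫ (ρ ⊗ₘ 𝟙 (T.obj (𝟙_ C))) ≫ (α_ M (T.obj (𝟙_ C)) (T.obj (𝟙_ C))).hom
    = ρ ≫ (𝟙 M ⊗ₘ Delta1 T Q)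
  counit : ρ ≫ (𝟙 M ⊗ₘ Q.ε) ≫ (ρ_ M).hom = 𝟙 M

/-- A right Hopf `T`-module: a `T`-module and right `T`-comodule satisfying the
compatibility `ρ ∘ r = (r ⊗ μ_𝟙) ∘ T_2(M,T(𝟙)) ∘ T(ρ)`. -/
structure IsRightHopfModule (T : Monad C) (Q : Comonoidal T.toFunctor)
    (M : C) (r : T.obj M ⟶ M) (ρ : M ⟶ M ⊗ T.obj (𝟙_ C)) : Prop where
  unit : T.η.app M ≫ r = 𝟙 M
  assoc : T.μ.app M ≫ r = T.map r ≫ r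
  comodule : IsRightComodule T.toFunctor Q M ρ
  hopf : r ≫ ρ = T.map ρ ≫ Q.δ M (T.obj (𝟙_ C)) ≫ (r ⊗ₘ T.μ.app (𝟙_ C))

/-! ### Auxiliary machinery -/

section AuxDual

variable (R : RightDualData C)

/-- The exact pairing associated to a choice of right duals. -/
def RightDualData.pairing (X : C) : ExactPairing (R.d X) X where
  coevaluation' := R.coev X
  evaluation' := R.ev X
  coevaluation_evaluation' := by
    have h := R.tri1 X
    simp only [id_tensorHom, tensorHom_id] at h
    have h2 := congrArg (fun t => (ρ_ X).hom ≫ t ≫ (λ_ X).inv) h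
    simpa [Category.assoc] using h2
  evaluation_coevaluation' := by
    have h := R.tri2 X
    simp only [id_tensorHom, tensorHom_id] at h
    have h2 := congrArg (fun t => (λ_ (R.d X)).hom ≫ t ≫ (ρ_ (R.d X)).inv) h
    simpa [Category.assoc] using h2

/-- Transport of morphisms across the coevaluation. -/
lemma RightDualData.coev_slide {X Y : C} (f : X ⟶ Y) :
    R.coev X ≫ (R.d X ◁ f) = R.coev Y ≫ (R.tr f ▷ Y) := by
  letI : ExactPairing (R.d X) X := R.pairing X
  letI : ExactPairing (R.d Y) Y := R.pairing Y
  letI : HasLeftDual X := ⟨R.d X⟩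
  letI : HasLeftDual Y := ⟨R.d Y⟩
  have e : R.tr f = (ᘁf) := by
    dsimp [RightDualData.tr, leftAdjointMate]
    simp only [id_tensorHom, tensorHom_id]
    rw [associator_naturality_middle_assoc]
    rfl
  rw [e]
  exact (coevaluation_comp_leftAdjointMate (C := C) f).symm

/-- Transport of morphisms across the evaluation. -/
lemma RightDualData.ev_slide {X Y : C} (f : X ⟶ Y) :
    (f ▷ R.d Y) ≫ R.ev Y = (X ◁ R.tr f) ≫ R.ev X := by
  letI : ExactPairing (R.d X) X := R.pairing X
  letI : ExactPairing (R.d Y) Y := R.pairing Y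
  letI : HasLeftDual X := ⟨R.d X⟩
  letI : HasLeftDual Y := ⟨R.d Y⟩
  have e : R.tr f = (ᘁf) := by
    dsimp [RightDualData.tr, leftAdjointMate]
    simp only [id_tensorHom, tensorHom_id]
    rw [associator_naturality_middle_assoc]
    rfl
  rw [e]
  exact (leftAdjointMate_comp_evaluation (C := C) f).symm

/-- The triangle identity in whiskered form. -/
lemma RightDualData.tri1' (X : C) :
    (X ◁ R.coev X) ≫ (α_ X (R.d X) X).inv ≫ (R.ev X ▷ X) ≫ (λ_ X).hom = (ρ_ X).hom := by
  have h := R.tri1 X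
  simp only [id_tensorHom, tensorHom_id] at h
  have h2 := congrArg (fun t => (ρ_ X).hom ≫ t) h
  simpa [Category.assoc] using h2


lemma RightDualData.tri1w (X : C) :
    (ρ_ X).inv ≫ (X ◁ R.coev X) ≫ (α_ X (R.d X) X).inv ≫ (R.ev X ▷ X) ≫ (λ_ X).hom
      = 𝟙 X := by
  have h := R.tri1 X
  simp only [id_tensorHom, tensorHom_id] at h
  exact h

/-- The evaluation-against-`B` pairing construction. -/
def prC (B : C) {A Z : C} (γ : A ⟶ R.d B ⊗ Z) : B ⊗ A ⟶ Z :=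
  (B ◁ γ) ≫ (α_ B (R.d B) Z).inv ≫ (R.ev B ▷ Z) ≫ (λ_ Z).hom

lemma prC_comp (B : C) {A Z Z' : C} (γ : A ⟶ R.d B ⊗ Z) (g : Z ⟶ Z') :
    prC R B (γ ≫ (R.d B ◁ g)) = prC R B γ ≫ g := by
  dsimp [prC]
  rw [MonoidalCategory.whiskerLeft_comp]
  slice_lhs 2 3 => rw [associator_inv_naturality_right]
  slice_lhs 3 4 => rw [whisker_exchange]
  simp

lemma prC_pre (B : C) {A' A Z : C} (x : A' ⟶ A) (γ : A ⟶ R.d B ⊗ Z) :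
    prC R B (x ≫ γ) = (B ◁ x) ≫ prC R B γ := by
  dsimp [prC]
  rw [MonoidalCategory.whiskerLeft_comp, Category.assoc]

lemma prC_ext (B : C) {A W V Z : C} (x : A ⟶ W ⊗ V) (γ : W ⟶ R.d B ⊗ Z) :
    prC R B (x ≫ (γ ▷ V) ≫ (α_ (R.d B) Z V).hom)
      = (B ◁ x) ≫ (α_ B W V).inv ≫ (prC R B γ ▷ V) := by
  dsimp [prC]
  simp only [MonoidalCategory.whiskerLeft_comp, Category.assoc, comp_whiskerRight]
  congr 1
  rw [← associator_inv_naturality_middle_assoc]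
  monoidal

lemma prC_base {B B' A Z : C} (g : B ⟶ B') (γ : A ⟶ R.d B' ⊗ Z) :
    (g ▷ A) ≫ prC R B' γ = prC R B (γ ≫ (R.tr g ▷ Z)) := by
  dsimp [prC]
  slice_lhs 1 2 => rw [← whisker_exchange]
  slice_lhs 2 3 => rw [associator_inv_naturality_left]
  slice_lhs 3 4 => rw [← comp_whiskerRight, R.ev_slide g, comp_whiskerRight]
  slice_lhs 2 3 => rw [← associator_inv_naturality_middle]
  simp only [MonoidalCategory.whiskerLeft_comp, Category.assoc]

end AuxDual

section AuxT

variable (T : Monad C) (Q : Comonoidal T.toFunctor)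

lemma delta_nat_l {X X' : C} (Y : C) (f : X ⟶ X') :
    T.map (f ▷ Y) ≫ Q.δ X' Y = Q.δ X Y ≫ (T.map f ▷ T.obj Y) := by
  have h := Q.δ_natural f (𝟙 Y)
  simp only [CategoryTheory.Functor.map_id, tensorHom_id] at h
  exact h

lemma delta_nat_r (X : C) {Y Y' : C} (g : Y ⟶ Y') :
    T.map (X ◁ g) ≫ Q.δ X Y' = Q.δ X Y ≫ (T.obj X ◁ T.map g) := by
  have h := Q.δ_natural (𝟙 X) g
  simp only [CategoryTheory.Functor.map_id, id_tensorHom] at h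
  exact h

/-- The "wall-splitting" operator `T X ⟶ T X ⊗ T 𝟙`. -/
def DD (B : C) : T.obj B ⟶ T.obj B ⊗ T.obj (𝟙_ C) :=
  T.map (ρ_ B).inv ≫ Q.δ B (𝟙_ C)

lemma DD_nat {B B' : C} (f : B ⟶ B') :
    T.map f ≫ DD T Q B' = DD T Q B ≫ (T.map f ▷ T.obj (𝟙_ C)) := by
  dsimp [DD]
  have h : f ≫ (ρ_ B').inv = (ρ_ B).inv ≫ (f ▷ 𝟙_ C) := by
    simp
  rw [← Category.assoc, ← T.toFunctor.map_comp, h, T.toFunctor.map_comp, Category.assoc,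
    delta_nat_l, Category.assoc]

lemma Delta1_eps :
    Delta1 T.toFunctor Q ≫ (Q.ε ▷ T.obj (𝟙_ C)) = (λ_ (T.obj (𝟙_ C))).inv := by
  dsimp [Delta1]
  have h := Q.counit_left (𝟙_ C)
  simp only [tensorHom_id] at h
  have h2 : Q.δ (𝟙_ C) (𝟙_ C) ≫ (Q.ε ▷ T.obj (𝟙_ C))
      = T.toFunctor.map (λ_ (𝟙_ C)).hom ≫ (λ_ (T.obj (𝟙_ C))).inv := by
    rw [← h]; simp [Category.assoc]
  rw [Category.assoc, h2, ← Category.assoc, ← T.toFunctor.map_comp]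
  simp

end AuxT

section AuxSig

variable (T : Monad C) (Q : Comonoidal T.toFunctor) (R : RightDualData C)
  (sr : ∀ X : C, T.obj (R.d (T.obj X)) ⟶ R.d X)

/-- The antipode-based map `T𝟙 ⟶ ʳB ⊗ TTB`. -/
def Gam (B : C) : T.obj (𝟙_ C) ⟶ R.d B ⊗ T.obj (T.obj B) :=
  T.map (R.coev (T.obj B)) ≫ Q.δ (R.d (T.obj B)) (T.obj B) ≫ (sr B ▷ T.obj (T.obj B))

/-- The fundamental map `σ_B : B ⊗ T𝟙 ⟶ TTB`. -/
def sig (B : C) : B ⊗ T.obj (𝟙_ C) ⟶ T.obj (T.obj B) := prC R B (Gam T Q R sr B)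

lemma gam_nat (hsr : IsRightAntipode T Q R sr) {B B' : C} (g : B ⟶ B') :
    Gam T Q R sr B' ≫ (R.tr g ▷ T.obj (T.obj B'))
      = Gam T Q R sr B ≫ (R.d B ◁ T.map (T.map g)) := by
  dsimp [Gam]
  slice_lhs 3 4 => rw [← comp_whiskerRight, ← hsr.natural g]
  rw [comp_whiskerRight]
  slice_lhs 2 3 => rw [← delta_nat_l]
  slice_lhs 1 2 => rw [← T.toFunctor.map_comp, ← R.coev_slide (T.map g), T.toFunctor.map_comp]
  slice_lhs 2 3 => rw [delta_nat_r]
  slice_lhs 3 4 => rw [whisker_exchange]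
  simp [Category.assoc]

lemma sig_nat (hsr : IsRightAntipode T Q R sr) {B B' : C} (g : B ⟶ B') :
    (g ▷ T.obj (𝟙_ C)) ≫ sig T Q R sr B' = sig T Q R sr B ≫ T.map (T.map g) := by
  dsimp only [sig]
  rw [prC_base, gam_nat T Q R sr hsr g, prC_comp]

lemma sig_mu (hsr : IsRightAntipode T Q R sr) (B : C) :
    sig T Q R sr B ≫ T.μ.app B = (B ◁ Q.ε) ≫ (ρ_ B).hom ≫ T.η.app B := by
  have h2 := hsr.rant2 B
  simp only [id_tensorHom, tensorHom_id] at h2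
  have gm : Gam T Q R sr B ≫ (R.d B ◁ T.μ.app B)
      = Q.ε ≫ R.coev B ≫ (R.d B ◁ T.η.app B) := by
    dsimp [Gam]
    slice_lhs 3 4 => rw [← MonoidalCategory.tensorHom_def]
    exact h2.symm
  dsimp only [sig]
  rw [← prC_comp, gm, ← Category.assoc Q.ε, prC_comp, prC_pre]
  have tri : prC R B (R.coev B) = (ρ_ B).hom := R.tri1' B
  rw [tri, Category.assoc]


lemma gam_AC (B : C) :
    Gam T Q R sr B ≫ (R.d B ◁ DD T Q (T.obj B))
      = Delta1 T.toFunctor Q ≫ (Gam T Q R sr B ▷ T.obj (𝟙_ C))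
          ≫ (α_ (R.d B) (T.obj (T.obj B)) (T.obj (𝟙_ C))).hom := by
  dsimp [Gam, DD, Delta1]
  -- move the antipode leg out of the way
  slice_lhs 3 4 => rw [← whisker_exchange]
  rw [MonoidalCategory.whiskerLeft_comp]
  slice_lhs 2 3 => rw [← delta_nat_r]
  -- merge the two δ's by coassociativity
  have hco := Q.coassoc (R.d (T.obj B)) (T.obj B) (𝟙_ C)
  simp only [id_tensorHom, tensorHom_id] at hco
  have hco' : Q.δ (R.d (T.obj B)) (T.obj B ⊗ 𝟙_ C)
      ≫ (T.obj (R.d (T.obj B)) ◁ Q.δ (T.obj B) (𝟙_ C))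
      = T.map (α_ (R.d (T.obj B)) (T.obj B) (𝟙_ C)).inv
        ≫ Q.δ (R.d (T.obj B) ⊗ T.obj B) (𝟙_ C)
        ≫ (Q.δ (R.d (T.obj B)) (T.obj B) ▷ T.obj (𝟙_ C))
        ≫ (α_ _ _ _).hom := by
    rw [hco, ← T.toFunctor.map_comp_assoc, Iso.inv_hom_id, T.toFunctor.map_id,
      Category.id_comp]
  slice_lhs 3 4 => rw [hco']
  -- slide the antipode whisker past the associator
  slice_lhs 6 7 => rw [← associator_naturality_left]
  -- collapse the unitor legs inside `T`
  have e1 : (R.d (T.obj B) ◁ (ρ_ (T.obj B)).inv)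
      ≫ (α_ (R.d (T.obj B)) (T.obj B) (𝟙_ C)).inv
      = (ρ_ (R.d (T.obj B) ⊗ T.obj B)).inv := by monoidal
  slice_lhs 2 3 => rw [← T.toFunctor.map_comp, e1]
  slice_lhs 1 2 => rw [← T.toFunctor.map_comp, rightUnitor_inv_naturality]
  have e2 : (ρ_ (𝟙_ C)).inv = (λ_ (𝟙_ C)).inv := by monoidal
  rw [e2, T.toFunctor.map_comp]
  slice_lhs 2 3 => rw [delta_nat_l]
  simp only [Category.assoc, comp_whiskerRight]

lemma sig_AC (B : C) :
    sig T Q R sr B ≫ DD T Q (T.obj B)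
      = (B ◁ Delta1 T.toFunctor Q) ≫ (α_ B (T.obj (𝟙_ C)) (T.obj (𝟙_ C))).inv
          ≫ (sig T Q R sr B ▷ T.obj (𝟙_ C)) := by
  dsimp only [sig]
  rw [← prC_comp, gam_AC, prC_ext]

/-- The `k`-map of a `T`-module `(B, F)`. -/
def kk (B : C) (F : T.obj B ⟶ B) : B ⊗ T.obj (𝟙_ C) ⟶ T.obj B :=
  sig T Q R sr B ≫ T.map F

lemma kk_nat (hsr : IsRightAntipode T Q R sr) {B B' : C}
    (F : T.obj B ⟶ B) (F' : T.obj B' ⟶ B') (g : B ⟶ B')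
    (hg : T.map g ≫ F' = F ≫ g) :
    (g ▷ T.obj (𝟙_ C)) ≫ kk T Q R sr B' F' = kk T Q R sr B F ≫ T.map g := by
  dsimp only [kk]
  rw [← Category.assoc, sig_nat T Q R sr hsr g, Category.assoc, ← T.toFunctor.map_comp,
    hg, T.toFunctor.map_comp, Category.assoc]

lemma kk_F (hsr : IsRightAntipode T Q R sr) (B : C) (F : T.obj B ⟶ B)
    (hF1 : T.η.app B ≫ F = 𝟙 B) (hF2 : T.μ.app B ≫ F = T.map F ≫ F) :
    kk T Q R sr B F ≫ F = (B ◁ Q.ε) ≫ (ρ_ B).hom := by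
  dsimp only [kk]
  rw [Category.assoc, ← hF2, ← Category.assoc, sig_mu T Q R sr hsr B]
  simp only [Category.assoc, hF1, Category.comp_id]

lemma kk_AC (B : C) (F : T.obj B ⟶ B) :
    kk T Q R sr B F ≫ DD T Q B
      = (B ◁ Delta1 T.toFunctor Q) ≫ (α_ B (T.obj (𝟙_ C)) (T.obj (𝟙_ C))).inv
          ≫ (kk T Q R sr B F ▷ T.obj (𝟙_ C)) := by
  dsimp only [kk]
  rw [Category.assoc, DD_nat, ← Category.assoc (sig T Q R sr B), sig_AC]
  simp only [Category.assoc, comp_whiskerRight]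

lemma kk_W (hsr : IsRightAntipode T Q R sr) (B : C) (F : T.obj B ⟶ B)
    (hF1 : T.η.app B ≫ F = 𝟙 B) (hF2 : T.μ.app B ≫ F = T.map F ≫ F) :
    kk T Q R sr B F ≫ DD T Q B ≫ (F ▷ T.obj (𝟙_ C)) = 𝟙 (B ⊗ T.obj (𝟙_ C)) := by
  rw [← Category.assoc, kk_AC]
  simp only [Category.assoc, ← comp_whiskerRight]
  rw [kk_F T Q R sr hsr B F hF1 hF2]
  rw [comp_whiskerRight]
  slice_lhs 2 3 => rw [← associator_inv_naturality_middle]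
  slice_lhs 1 2 => rw [← MonoidalCategory.whiskerLeft_comp, Delta1_eps]
  monoidal


lemma gam_mu2 (B : C) :
    Gam T Q R sr (T.obj B) ≫ (R.d (T.obj B) ◁ T.map (T.μ.app B))
      = T.map (R.coev (T.obj B)) ≫ Q.δ (R.d (T.obj B)) (T.obj B)
        ≫ ((T.map (R.tr (T.μ.app B)) ≫ sr (T.obj B)) ▷ T.obj (T.obj B)) := by
  dsimp [Gam]
  slice_lhs 3 4 => rw [← whisker_exchange]
  slice_lhs 2 3 => rw [← delta_nat_r]
  slice_lhs 1 2 => rw [← T.toFunctor.map_comp,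
    R.coev_slide (show T.obj (T.obj B) ⟶ T.obj B from T.μ.app B), T.toFunctor.map_comp]
  slice_lhs 2 3 => rw [delta_nat_l]
  simp only [Category.assoc, comp_whiskerRight]

lemma theta (hsr : IsRightAntipode T Q R sr) (B : C) (F : T.obj B ⟶ B)
    (hF1 : T.η.app B ≫ F = 𝟙 B) (hF2 : T.μ.app B ≫ F = T.map F ≫ F) :
    DD T Q B ≫ (F ▷ T.obj (𝟙_ C)) ≫ kk T Q R sr B F = 𝟙 (T.obj B) := by
  dsimp only [kk]
  rw [← Category.assoc (F ▷ T.obj (𝟙_ C)), sig_nat T Q R sr hsr F]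
  rw [Category.assoc, ← T.toFunctor.map_comp,
    show T.map F ≫ F = T.μ.app B ≫ F from hF2.symm, T.toFunctor.map_comp]
  dsimp only [sig]
  rw [← Category.assoc (prC R (T.obj B) (Gam T Q R sr (T.obj B))), ← prC_comp, gam_mu2]
  -- now unfold everything
  dsimp only [prC, DD]
  simp only [MonoidalCategory.whiskerLeft_comp, Category.assoc]
  slice_lhs 2 3 => rw [← delta_nat_r]
  -- merge δ's
  have hco := Q.coassoc B (R.d (T.obj B)) (T.obj B)
  simp only [id_tensorHom, tensorHom_id] at hco
  have hco' : Q.δ B (R.d (T.obj B) ⊗ T.obj B)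
      ≫ (T.obj B ◁ Q.δ (R.d (T.obj B)) (T.obj B))
      = T.map (α_ B (R.d (T.obj B)) (T.obj B)).inv
        ≫ Q.δ (B ⊗ R.d (T.obj B)) (T.obj B)
        ≫ (Q.δ B (R.d (T.obj B)) ▷ T.obj (T.obj B))
        ≫ (α_ _ _ _).hom := by
    rw [hco, ← T.toFunctor.map_comp_assoc, Iso.inv_hom_id, T.toFunctor.map_id,
      Category.id_comp]
  slice_lhs 3 4 => rw [hco']
  -- cancel associators around the antipode whisker
  slice_lhs 6 7 =>
    rw [← associator_naturality_middle]
  slice_lhs 7 8 => rw [Iso.hom_inv_id]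
  simp only [Category.id_comp, Category.comp_id]
  -- collect the whiskerRights and apply rant1
  have hr1 := hsr.rant1 B
  simp only [id_tensorHom, tensorHom_id] at hr1
  slice_lhs 5 7 =>
    rw [← comp_whiskerRight, ← comp_whiskerRight, ← hr1]
  simp only [comp_whiskerRight, Category.assoc]
  -- fold into T and use counit_left
  slice_lhs 5 6 => rw [← comp_whiskerRight, ← T.toFunctor.map_comp]
  slice_lhs 4 5 => rw [← delta_nat_l]
  have hcl := Q.counit_left (T.obj B)
  simp only [tensorHom_id] at hcl
  slice_lhs 5 7 => rw [hcl]
  -- everything is now inside T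
  simp only [← T.toFunctor.map_comp, ← T.toFunctor.map_comp_assoc]
  rw [show (𝟙 (T.obj B) : T.obj B ⟶ T.obj B) = T.map (𝟙 B) by simp]
  congr 1
  -- the inner identity
  rw [← R.ev_slide (show B ⟶ T.obj B from T.η.app B), comp_whiskerRight]
  slice_lhs 3 4 => rw [← associator_inv_naturality_left]
  slice_lhs 2 3 => rw [whisker_exchange]
  slice_lhs 1 2 => rw [← rightUnitor_inv_naturality]
  slice_lhs 2 6 => rw [R.tri1w (T.obj B)]
  simp [hF1]


/-- `W^{mod}_B := DD ≫ (F ▷ T𝟙)` is a module map from the free module `(TB, μ)`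
to the tensor-product module `(B ⊗ T𝟙, δ ≫ (F ⊗ₘ μ))`. -/
lemma Wmod_mod (hB : IsBimonad T Q) (B : C) (F : T.obj B ⟶ B)
    (hF2 : T.μ.app B ≫ F = T.map F ≫ F) :
    T.map (DD T Q B ≫ (F ▷ T.obj (𝟙_ C)))
        ≫ Q.δ B (T.obj (𝟙_ C)) ≫ (F ⊗ₘ T.μ.app (𝟙_ C))
      = T.μ.app B ≫ DD T Q B ≫ (F ▷ T.obj (𝟙_ C)) := by
  dsimp only [DD]
  rw [T.toFunctor.map_comp, T.toFunctor.map_comp]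
  have h1 := Q.δ_natural F (𝟙 (T.obj (𝟙_ C)))
  simp only [CategoryTheory.Functor.map_id, tensorHom_id] at h1
  slice_lhs 3 4 => rw [h1]
  have h2 : (T.map F ▷ T.obj (T.obj (𝟙_ C))) ≫ (F ⊗ₘ T.μ.app (𝟙_ C))
      = (T.μ.app B ⊗ₘ T.μ.app (𝟙_ C)) ≫ (F ▷ T.obj (𝟙_ C)) := by
    rw [MonoidalCategory.tensorHom_def]
    rw [← comp_whiskerRight_assoc, ← hF2, comp_whiskerRight_assoc]
    rw [tensorHom_def']
    simp only [Category.assoc, whisker_exchange]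
    rfl
  slice_lhs 4 5 => rw [h2]
  have h3 := hB.mu_δ B (𝟙_ C)
  slice_lhs 2 4 => rw [← h3]
  slice_lhs 1 2 =>
    rw [show T.map (T.map (ρ_ B).inv) ≫ T.μ.app (B ⊗ 𝟙_ C)
        = T.μ.app B ≫ T.map (ρ_ B).inv from T.μ.naturality (ρ_ B).inv]
  simp only [Category.assoc]

lemma eta_Wmod (hB : IsBimonad T Q) (B : C) (F : T.obj B ⟶ B)
    (hF1 : T.η.app B ≫ F = 𝟙 B) :
    T.η.app B ≫ DD T Q B ≫ (F ▷ T.obj (𝟙_ C))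
      = (ρ_ B).inv ≫ (B ◁ T.η.app (𝟙_ C)) := by
  dsimp only [DD]
  simp only [Category.assoc]
  slice_lhs 1 2 => rw [show T.η.app B ≫ T.map (ρ_ B).inv
      = (ρ_ B).inv ≫ T.η.app (B ⊗ 𝟙_ C) from by
        simpa using (T.η.naturality (ρ_ B).inv).symm]
  slice_lhs 2 3 => rw [hB.eta_δ]
  rw [MonoidalCategory.tensorHom_def]
  simp only [Category.assoc]
  slice_lhs 3 4 => rw [whisker_exchange]
  slice_lhs 2 3 => rw [← comp_whiskerRight, hF1]
  simp

lemma mapEta_Wmod (B : C) :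
    T.map (T.η.app B) ≫ DD T Q (T.obj B) ≫ (T.μ.app B ▷ T.obj (𝟙_ C)) = DD T Q B := by
  dsimp only [DD]
  simp only [Category.assoc]
  slice_lhs 1 2 => rw [← T.toFunctor.map_comp,
    show T.η.app B ≫ (ρ_ (T.obj B)).inv = (ρ_ B).inv ≫ (T.η.app B ▷ 𝟙_ C) by simp,
    T.toFunctor.map_comp]
  slice_lhs 2 3 => rw [delta_nat_l]
  slice_lhs 3 4 => rw [← comp_whiskerRight, T.right_unit]
  simp

lemma claimZ (hsr : IsRightAntipode T Q R sr) (B : C) :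
    DD T Q B ≫ kk T Q R sr (T.obj B) (T.μ.app B) = T.map (T.η.app B) := by
  rw [← mapEta_Wmod T Q B]
  simp only [Category.assoc]
  rw [theta T Q R sr hsr (T.obj B) (T.μ.app B) (T.left_unit B) (T.assoc B).symm]
  simp

end AuxSig





/-- fundamental theorem of Hopf modules. Let `T` be a right Hopf
monad (a bimonad with a right antipode) on a right autonomous category, and let
`(M,r,ρ)` be a right Hopf `T`-module such that the pair `(ρ, id_M ⊗ η_𝟙)` admits an
equalizer `i : M^{coT} ⟶ M` which is preserved by `T`.  Then
`r ∘ T(i) : (T(M^{coT}), μ, T_2(M^{coT},𝟙)) ⟶ (M,r,ρ)` is an isomorphism of right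
Hopf `T`-modules (i.e. an isomorphism, `T`-linear, and a morphism of comodules). -/
theorem stmt14 (T : Monad C) (Q : Comonoidal T.toFunctor) (hB : IsBimonad T Q)
    (R : RightDualData C) (sr : ∀ X : C, T.obj (R.d (T.obj X)) ⟶ R.d X)
    (hsr : IsRightAntipode T Q R sr)
    (M : C) (r : T.obj M ⟶ M) (ρ : M ⟶ M ⊗ T.obj (𝟙_ C))
    (hM : IsRightHopfModule T Q M r ρ)
    (N : C) (i : N ⟶ M)
    (hi : i ≫ ρ = i ≫ (ρ_ M).inv ≫ (𝟙 M ⊗ₘ T.η.app (𝟙_ C)))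
    (huniv : ∀ ⦃W : C⦄ (j : W ⟶ M),
      j ≫ ρ = j ≫ (ρ_ M).inv ≫ (𝟙 M ⊗ₘ T.η.app (𝟙_ C)) →
      ∃! k : W ⟶ N, k ≫ i = j)
    (hTuniv : ∀ ⦃W : C⦄ (j : W ⟶ T.obj M),
      j ≫ T.map ρ = j ≫ T.map ((ρ_ M).inv ≫ (𝟙 M ⊗ₘ T.η.app (𝟙_ C))) →
      ∃! k : W ⟶ T.obj N, k ≫ T.map i = j) :
    IsIso (T.map i ≫ r) ∧
    (T.μ.app N ≫ T.map i ≫ r = T.map (T.map i ≫ r) ≫ r) ∧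
    ((T.map i ≫ r) ≫ ρ
      = (T.map (ρ_ N).inv ≫ Q.δ N (𝟙_ C)) ≫ ((T.map i ≫ r) ⊗ₘ 𝟙 (T.obj (𝟙_ C)))) := by
  have hρmod : T.map ρ ≫ (Q.δ M (T.obj (𝟙_ C)) ≫ (r ⊗ₘ T.μ.app (𝟙_ C))) = r ≫ ρ := (hM.hopf).symm
  have hi' : i ≫ ρ = i ≫ (ρ_ M).inv ≫ (M ◁ T.η.app (𝟙_ C)) := by
    simpa [id_tensorHom] using hi
  -- `T i` is a monomorphism
  have hTieq : T.map i ≫ T.map ρ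
      = T.map i ≫ T.map ((ρ_ M).inv ≫ (𝟙 M ⊗ₘ T.η.app (𝟙_ C))) := by
    rw [← T.toFunctor.map_comp, ← T.toFunctor.map_comp, hi]
  have monoTi : Mono (T.map i) := by
    constructor
    intro W a b hab
    have hj : (b ≫ T.map i) ≫ T.map ρ
        = (b ≫ T.map i) ≫ T.map ((ρ_ M).inv ≫ (𝟙 M ⊗ₘ T.η.app (𝟙_ C))) := by
      simp only [Category.assoc, hTieq]
    obtain ⟨k, -, hk⟩ := hTuniv (b ≫ T.map i) hj
    rw [hk a hab, hk b rfl]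
  -- the candidate inverse data
  set κ : M ⟶ T.obj M := ρ ≫ kk T Q R sr M r with hκ
  -- (b) : κ ≫ r = 𝟙
  have hbr : κ ≫ r = 𝟙 M := by
    rw [hκ, Category.assoc, kk_F T Q R sr hsr M r hM.unit hM.assoc]
    have := hM.comodule.counit
    simp only [id_tensorHom, Category.assoc] at this
    simpa [Category.assoc] using this
  -- `T g₀ ≫ (Q.δ M (T.obj (𝟙_ C)) ≫ (r ⊗ₘ T.μ.app (𝟙_ C))) = DD ≫ (r ▷ (T.obj (𝟙_ C)))`
  have hg0FF : T.map ((ρ_ M).inv ≫ (M ◁ T.η.app (𝟙_ C))) ≫ (Q.δ M (T.obj (𝟙_ C)) ≫ (r ⊗ₘ T.μ.app (𝟙_ C)))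
      = DD T Q M ≫ (r ▷ (T.obj (𝟙_ C))) := by
    rw [T.toFunctor.map_comp]
    slice_lhs 2 3 => rw [delta_nat_r]
    have e : (T.obj M ◁ T.map (T.η.app (𝟙_ C))) ≫ (r ⊗ₘ T.μ.app (𝟙_ C))
        = (r ▷ (T.obj (𝟙_ C))) := by
      rw [tensorHom_def']
      rw [← Category.assoc, ← MonoidalCategory.whiskerLeft_comp, T.right_unit]
      simp
    slice_lhs 3 4 => rw [e]
    simp only [DD, Category.assoc]
  -- (c) : T i ≫ r ≫ κ = T i
  have hc : T.map i ≫ r ≫ κ = T.map i := by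
    rw [hκ, ← Category.assoc r]
    rw [hM.hopf]
    simp only [Category.assoc]
    slice_lhs 1 2 => rw [← T.toFunctor.map_comp, hi', T.toFunctor.map_comp,
      T.toFunctor.map_comp]
    slice_lhs 2 3 => rw [← T.toFunctor.map_comp]
    slice_lhs 2 4 => rw [hg0FF]
    slice_lhs 2 4 => rw [theta T Q R sr hsr M r hM.unit hM.assoc]
    simp
  -- (a) : κ equalizes the two maps
  have hcoa : ρ ≫ (ρ ▷ (T.obj (𝟙_ C))) = ρ ≫ (M ◁ Delta1 T.toFunctor Q) ≫ (α_ M (T.obj (𝟙_ C)) (T.obj (𝟙_ C))).inv := by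
    have h := hM.comodule.coassoc
    simp only [id_tensorHom, tensorHom_id] at h
    have h2 := congrArg (fun t => t ≫ (α_ M (T.obj (𝟙_ C)) (T.obj (𝟙_ C))).inv) h
    simpa [Category.assoc] using h2
  have ha : κ ≫ T.map ρ
      = κ ≫ T.map ((ρ_ M).inv ≫ (𝟙 M ⊗ₘ T.η.app (𝟙_ C))) := by
    have step1 : κ ≫ T.map ρ = ρ ≫ (ρ ▷ (T.obj (𝟙_ C))) ≫ kk T Q R sr (M ⊗ (T.obj (𝟙_ C))) (Q.δ M (T.obj (𝟙_ C)) ≫ (r ⊗ₘ T.μ.app (𝟙_ C))) := by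
      rw [hκ, Category.assoc,
        ← kk_nat T Q R sr hsr r (Q.δ M (T.obj (𝟙_ C)) ≫ (r ⊗ₘ T.μ.app (𝟙_ C))) ρ hρmod]
    have step2 : ρ ≫ (ρ ▷ (T.obj (𝟙_ C))) ≫ kk T Q R sr (M ⊗ (T.obj (𝟙_ C))) (Q.δ M (T.obj (𝟙_ C)) ≫ (r ⊗ₘ T.μ.app (𝟙_ C)))
        = ρ ≫ (M ◁ Delta1 T.toFunctor Q) ≫ (α_ M (T.obj (𝟙_ C)) (T.obj (𝟙_ C))).inv
            ≫ ((kk T Q R sr M r ≫ (DD T Q M ≫ (r ▷ (T.obj (𝟙_ C))))) ▷ (T.obj (𝟙_ C)))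
            ≫ kk T Q R sr (M ⊗ (T.obj (𝟙_ C))) (Q.δ M (T.obj (𝟙_ C)) ≫ (r ⊗ₘ T.μ.app (𝟙_ C))) := by
      rw [← Category.assoc ρ, hcoa]
      rw [kk_W T Q R sr hsr M r hM.unit hM.assoc]
      simp
    have step3 : ((DD T Q M ≫ (r ▷ (T.obj (𝟙_ C)))) ▷ (T.obj (𝟙_ C))) ≫ kk T Q R sr (M ⊗ (T.obj (𝟙_ C))) (Q.δ M (T.obj (𝟙_ C)) ≫ (r ⊗ₘ T.μ.app (𝟙_ C)))
        = kk T Q R sr (T.obj M) (T.μ.app M) ≫ T.map (DD T Q M ≫ (r ▷ (T.obj (𝟙_ C)))) := by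
      exact kk_nat T Q R sr hsr (T.μ.app M) (Q.δ M (T.obj (𝟙_ C)) ≫ (r ⊗ₘ T.μ.app (𝟙_ C))) (DD T Q M ≫ (r ▷ (T.obj (𝟙_ C))))
        (Wmod_mod T Q hB M r hM.assoc)
    have step4 : (M ◁ Delta1 T.toFunctor Q) ≫ (α_ M (T.obj (𝟙_ C)) (T.obj (𝟙_ C))).inv
        ≫ (kk T Q R sr M r ▷ (T.obj (𝟙_ C))) = kk T Q R sr M r ≫ DD T Q M :=
      (kk_AC T Q R sr M r).symm
    rw [step1, step2]
    simp only [comp_whiskerRight, Category.assoc]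
    rw [← Category.assoc (DD T Q M ▷ (T.obj (𝟙_ C))), ← comp_whiskerRight]
    rw [show (DD T Q M ≫ r ▷ T.obj (𝟙_ C)) ▷ T.obj (𝟙_ C)
          ≫ kk T Q R sr (M ⊗ T.obj (𝟙_ C)) (Q.δ M (T.obj (𝟙_ C)) ≫ (r ⊗ₘ T.μ.app (𝟙_ C)))
        = kk T Q R sr (T.obj M) (T.μ.app M) ≫ T.map (DD T Q M ≫ r ▷ T.obj (𝟙_ C))
      from step3]
    rw [reassoc_of% step4]
    slice_lhs 3 4 => rw [claimZ T Q R sr hsr M]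
    rw [hκ]
    simp only [Category.assoc, ← T.toFunctor.map_comp]
    rw [eta_Wmod T Q hB M r hM.unit]
    simp [id_tensorHom]
  -- the factorization through the equalizer
  obtain ⟨ψ, hψ, -⟩ := hTuniv κ ha
  have inv_hom : ψ ≫ (T.map i ≫ r) = 𝟙 M := by
    rw [← Category.assoc, hψ, hbr]
  have hom_inv : (T.map i ≫ r) ≫ ψ = 𝟙 (T.obj N) := by
    rw [← cancel_mono (T.map i)]
    simp only [Category.assoc, hψ, Category.id_comp]
    exact hc
  refine ⟨⟨ψ, hom_inv, inv_hom⟩, ?_, ?_⟩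
  · -- T-linearity
    rw [← Category.assoc, show T.μ.app N ≫ T.map i = T.map (T.map i) ≫ T.μ.app M from
      (T.μ.naturality i).symm, T.toFunctor.map_comp]
    simp only [Category.assoc, hM.assoc]
  · -- comodule morphism
    rw [Category.assoc, hM.hopf, ← Category.assoc (T.map i), ← T.toFunctor.map_comp, hi']
    have e1 : i ≫ (ρ_ M).inv = (ρ_ N).inv ≫ (i ▷ 𝟙_ C) := by simp
    rw [show i ≫ (ρ_ M).inv ≫ (M ◁ T.η.app (𝟙_ C))
        = (ρ_ N).inv ≫ (i ⊗ₘ T.η.app (𝟙_ C)) from by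
      rw [← Category.assoc, e1, Category.assoc, MonoidalCategory.tensorHom_def]]
    rw [T.toFunctor.map_comp, Category.assoc, Category.assoc,
      ← Category.assoc (T.map (i ⊗ₘ T.η.app (𝟙_ C))), Q.δ_natural i (T.η.app (𝟙_ C))]
    have e2 : (T.map i ⊗ₘ T.map (T.η.app (𝟙_ C))) ≫ (r ⊗ₘ T.μ.app (𝟙_ C))
        = (T.map i ≫ r) ⊗ₘ 𝟙 (T.obj (𝟙_ C)) := by
      rw [tensorHom_comp_tensorHom, T.right_unit]
      rfl
    simp only [Category.assoc]
    rw [e2]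
    rfl

end HopfMonadPaper
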